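/- arXiv:1908.02055 — 9 statements merged into one kernel-verified Lean document; each statement's English description precedes it below -/
import Mathlib

section
/- Suppose the initial lattice states satisfy 0 ≤ a_i^0, 0 ≤ r_i^0 and a_i^0 + r_i^0 ≤ 1 for all sites i = 1,…,N, and suppose the CFL-type condition 1 − 2τH·V_max − τ·max(2H·V_max, B_a, B_r, A_a, A_r) ≥ 0 holds. Then for every time step k ≥ 0 and every site i = 1,…,N the states generated by the explicit Euler scheme satisfy 0 ≤ a_i^k, 0 ≤ r_i^k and a_i^k + r_i^k ≤ 1. -/
/-- If the initial lattice states satisfy the box constraints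
`0 ≤ a_i^0`, `0 ≤ r_i^0`, `a_i^0 + r_i^0 ≤ 1` for all sites `i = 1,…,N`, and the
CFL-type condition `1 - 2τH·V_max - τ·max(2H·V_max, B_a, B_r, A_a, A_r) ≥ 0`
holds, then the states generated by the explicit Euler scheme satisfy the box
constraints at every time step `k` and every site `i = 1,…,N`. -/
theorem box_constraints_preserved
    (N : ℕ) (hN : 3 ≤ N)
    (τ H Vmax : ℝ) (hτ : 0 < τ) (hH : 0 ≤ H) (hVmax : 0 < Vmax)
    (Aa Ar Ba Br : ℝ) (hAa : 0 ≤ Aa) (hAr : 0 ≤ Ar) (hBa : 0 ≤ Ba) (hBr : 0 ≤ Br)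
    (wa wr : ℕ → ℕ → ℝ)
    (hwa_pos : ∀ i j : ℕ, (j = i + 1 ∨ i = j + 1) → 0 < wa i j)
    (hwr_pos : ∀ i j : ℕ, (j = i + 1 ∨ i = j + 1) → 0 < wr i j)
    (hwa_le : ∀ i j : ℕ, (j = i + 1 ∨ i = j + 1) → wa i j ≤ Vmax)
    (hwr_le : ∀ i j : ℕ, (j = i + 1 ∨ i = j + 1) → wr i j ≤ Vmax)
    (a r : ℕ → ℕ → ℝ)
    -- initial box constraints
    (ha0 : ∀ i : ℕ, 1 ≤ i → i ≤ N → 0 ≤ a 0 i)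
    (hr0 : ∀ i : ℕ, 1 ≤ i → i ≤ N → 0 ≤ r 0 i)
    (hrho0 : ∀ i : ℕ, 1 ≤ i → i ≤ N → a 0 i + r 0 i ≤ 1)
    -- explicit Euler update at interior sites
    (ha_upd : ∀ k : ℕ, ∀ i : ℕ, 2 ≤ i → i ≤ N - 1 →
      a (k + 1) i = a k i + τ * H *
        (-(a k i) * (1 - (a k (i - 1) + r k (i - 1))) * wa i (i - 1)
          + a k (i - 1) * (1 - (a k i + r k i)) * wa (i - 1) i
          - a k i * (1 - (a k (i + 1) + r k (i + 1))) * wa i (i + 1)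
          + a k (i + 1) * (1 - (a k i + r k i)) * wa (i + 1) i))
    (hr_upd : ∀ k : ℕ, ∀ i : ℕ, 2 ≤ i → i ≤ N - 1 →
      r (k + 1) i = r k i + τ * H *
        (-(r k i) * (1 - (a k (i - 1) + r k (i - 1))) * wr i (i - 1)
          + r k (i - 1) * (1 - (a k i + r k i)) * wr (i - 1) i
          - r k i * (1 - (a k (i + 1) + r k (i + 1))) * wr i (i + 1)
          + r k (i + 1) * (1 - (a k i + r k i)) * wr (i + 1) i))
    -- explicit Euler update at the boundary sites
    (ha1_upd : ∀ k : ℕ,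
      a (k + 1) 1 = a k 1 + τ *
        (H * (-(a k 1) * (1 - (a k 2 + r k 2)) * wa 1 2
          + a k 2 * (1 - (a k 1 + r k 1)) * wa 2 1)
          + Aa * (1 - (a k 1 + r k 1))))
    (haN_upd : ∀ k : ℕ,
      a (k + 1) N = a k N + τ *
        (H * (-(a k N) * (1 - (a k (N - 1) + r k (N - 1))) * wa N (N - 1)
          + a k (N - 1) * (1 - (a k N + r k N)) * wa (N - 1) N)
          - Ba * a k N))
    (hr1_upd : ∀ k : ℕ,
      r (k + 1) 1 = r k 1 + τ *
        (H * (-(r k 1) * (1 - (a k 2 + r k 2)) * wr 1 2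
          + r k 2 * (1 - (a k 1 + r k 1)) * wr 2 1)
          - Br * r k 1))
    (hrN_upd : ∀ k : ℕ,
      r (k + 1) N = r k N + τ *
        (H * (-(r k N) * (1 - (a k (N - 1) + r k (N - 1))) * wr N (N - 1)
          + r k (N - 1) * (1 - (a k N + r k N)) * wr (N - 1) N)
          + Ar * (1 - (a k N + r k N))))
    -- CFL-type condition
    (hCFL : 0 ≤ 1 - 2 * τ * H * Vmax
      - τ * max (2 * H * Vmax) (max Ba (max Br (max Aa Ar)))) :
    ∀ k : ℕ, ∀ i : ℕ, 1 ≤ i → i ≤ N →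
      0 ≤ a k i ∧ 0 ≤ r k i ∧ a k i + r k i ≤ 1 := by
  have hτ' : (0:ℝ) ≤ τ := hτ.le
  set M := max (2 * H * Vmax) (max Ba (max Br (max Aa Ar))) with hMdef
  have hHM : 2 * H * Vmax ≤ M := le_max_left _ _
  have hBaM : Ba ≤ M := le_trans (le_max_left _ _) (le_max_right _ _)
  have hBrM : Br ≤ M :=
    le_trans (le_trans (le_max_left _ _) (le_max_right _ _)) (le_max_right _ _)
  have hAaM : Aa ≤ M :=
    le_trans (le_trans (le_max_left _ _) (le_max_right _ _))
      (le_trans (le_max_right _ _) (le_max_right _ _))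
  have hArM : Ar ≤ M :=
    le_trans (le_trans (le_max_right _ _) (le_max_right _ _))
      (le_trans (le_max_right _ _) (le_max_right _ _))
  have hHV : 0 ≤ H * Vmax := mul_nonneg hH hVmax.le
  have hM0 : 0 ≤ M := le_trans (by linarith) hHM
  have hτM : 0 ≤ τ * M := mul_nonneg hτ' hM0
  have hτHV : 0 ≤ τ * H * Vmax := mul_nonneg (mul_nonneg hτ' hH) hVmax.le
  have h2CFL : 0 ≤ 1 - 2 * (τ * H * Vmax) := by linarith
  have hτBa : τ * Ba ≤ τ * M := mul_le_mul_of_nonneg_left hBaM hτ'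
  have hτBr : τ * Br ≤ τ * M := mul_le_mul_of_nonneg_left hBrM hτ'
  have hτAa : τ * Aa ≤ τ * M := mul_le_mul_of_nonneg_left hAaM hτ'
  have hτAr : τ * Ar ≤ τ * M := mul_le_mul_of_nonneg_left hArM hτ'
  have hcBa : 0 ≤ 1 - τ * H * Vmax - τ * Ba := by linarith
  have hcBr : 0 ≤ 1 - τ * H * Vmax - τ * Br := by linarith
  have hcAa : 0 ≤ 1 - τ * H * Vmax - τ * Aa := by linarith
  have hcAr : 0 ≤ 1 - τ * H * Vmax - τ * Ar := by linarith
  have hτH : 0 ≤ τ * H := mul_nonneg hτ' hH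
  intro k
  induction k with
  | zero => exact fun i h1 h2 => ⟨ha0 i h1 h2, hr0 i h1 h2, hrho0 i h1 h2⟩
  | succ k IH =>
    intro i hi1 hiN
    rcases (by omega : i = 1 ∨ i = N ∨ (2 ≤ i ∧ i ≤ N - 1 ∧ 1 ≤ i - 1 ∧ i + 1 ≤ N ∧ i - 1 + 1 = i)) with h1 | hNc | ⟨h2, h3, h4, h5, h6⟩
    · subst h1
      obtain ⟨ha1, hr1, hρ1⟩ := IH 1 (by omega) (by omega)
      obtain ⟨ha2, hr2, hρ2⟩ := IH 2 (by omega) (by omega)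
      have hu1 : 0 ≤ 1 - (a k 1 + r k 1) := by linarith
      have hu2 : 0 ≤ 1 - (a k 2 + r k 2) := by linarith
      have hwa12 := hwa_pos 1 2 (Or.inl rfl)
      have hwa21 := hwa_pos 2 1 (Or.inr rfl)
      have hwr12 := hwr_pos 1 2 (Or.inl rfl)
      have hwr21 := hwr_pos 2 1 (Or.inr rfl)
      have hwa12V := hwa_le 1 2 (Or.inl rfl)
      have hwa21V := hwa_le 2 1 (Or.inr rfl)
      have hwr12V := hwr_le 1 2 (Or.inl rfl)
      have hwr21V := hwr_le 2 1 (Or.inr rfl)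
      -- outgoing rate bounds
      have hXa : (1 - (a k 2 + r k 2)) * wa 1 2 ≤ Vmax := by
        have := mul_le_mul (show 1 - (a k 2 + r k 2) ≤ 1 by linarith) hwa12V hwa12.le zero_le_one
        linarith
      have hXr : (1 - (a k 2 + r k 2)) * wr 1 2 ≤ Vmax := by
        have := mul_le_mul (show 1 - (a k 2 + r k 2) ≤ 1 by linarith) hwr12V hwr12.le zero_le_one
        linarith
      -- incoming flow bound at site 1
      have hS : a k 2 * wa 2 1 + r k 2 * wr 2 1 ≤ Vmax := by
        have t1 := mul_le_mul_of_nonneg_left hwa21V ha2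
        have t2 := mul_le_mul_of_nonneg_left hwr21V hr2
        have t3 := mul_le_mul_of_nonneg_right hρ2 hVmax.le
        linarith
      refine ⟨?_, ?_, ?_⟩
      · rw [ha1_upd k]
        linarith [mul_nonneg (mul_nonneg hτH ha1) (by linarith : (0:ℝ) ≤ Vmax - (1 - (a k 2 + r k 2)) * wa 1 2),
          mul_nonneg ha1 (by linarith : (0:ℝ) ≤ 1 - τ * H * Vmax),
          mul_nonneg (mul_nonneg (mul_nonneg hτH ha2) hu1) hwa21.le,
          mul_nonneg (mul_nonneg hτ' hAa) hu1]
      · rw [hr1_upd k]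
        linarith [mul_nonneg (mul_nonneg hτH hr1) (by linarith : (0:ℝ) ≤ Vmax - (1 - (a k 2 + r k 2)) * wr 1 2),
          mul_nonneg hr1 hcBr,
          mul_nonneg (mul_nonneg (mul_nonneg hτH hr2) hu1) hwr21.le]
      · rw [ha1_upd k, hr1_upd k]
        linarith [mul_nonneg hu1 (by linarith : (0:ℝ) ≤ 1 - τ * H * Vmax - τ * Aa),
          mul_nonneg (mul_nonneg hτH hu1) (by linarith : (0:ℝ) ≤ Vmax - (a k 2 * wa 2 1 + r k 2 * wr 2 1)),
          mul_nonneg (mul_nonneg (mul_nonneg hτH ha1) hu2) hwa12.le,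
          mul_nonneg (mul_nonneg (mul_nonneg hτH hr1) hu2) hwr12.le,
          mul_nonneg (mul_nonneg hτ' hBr) hr1]
    · subst hNc
      obtain ⟨haN, hrN, hρN⟩ := IH i (by omega) (by omega)
      obtain ⟨ham, hrm, hρm⟩ := IH (i-1) (by omega) (by omega)
      have huN : 0 ≤ 1 - (a k i + r k i) := by linarith
      have hum : 0 ≤ 1 - (a k (i-1) + r k (i-1)) := by linarith
      have hwaNm := hwa_pos i (i-1) (Or.inr (by omega))
      have hwamN := hwa_pos (i-1) i (Or.inl (by omega))
      have hwrNm := hwr_pos i (i-1) (Or.inr (by omega))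
      have hwrmN := hwr_pos (i-1) i (Or.inl (by omega))
      have hwaNmV := hwa_le i (i-1) (Or.inr (by omega))
      have hwamNV := hwa_le (i-1) i (Or.inl (by omega))
      have hwrNmV := hwr_le i (i-1) (Or.inr (by omega))
      have hwrmNV := hwr_le (i-1) i (Or.inl (by omega))
      have hXa : (1 - (a k (i-1) + r k (i-1))) * wa i (i-1) ≤ Vmax := by
        have := mul_le_mul (show 1 - (a k (i-1) + r k (i-1)) ≤ 1 by linarith) hwaNmV hwaNm.le zero_le_one
        linarith
      have hXr : (1 - (a k (i-1) + r k (i-1))) * wr i (i-1) ≤ Vmax := by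
        have := mul_le_mul (show 1 - (a k (i-1) + r k (i-1)) ≤ 1 by linarith) hwrNmV hwrNm.le zero_le_one
        linarith
      have hS : a k (i-1) * wa (i-1) i + r k (i-1) * wr (i-1) i ≤ Vmax := by
        have t1 := mul_le_mul_of_nonneg_left hwamNV ham
        have t2 := mul_le_mul_of_nonneg_left hwrmNV hrm
        have t3 := mul_le_mul_of_nonneg_right hρm hVmax.le
        linarith
      refine ⟨?_, ?_, ?_⟩
      · rw [haN_upd k]
        linarith [mul_nonneg (mul_nonneg hτH haN) (by linarith : (0:ℝ) ≤ Vmax - (1 - (a k (i-1) + r k (i-1))) * wa i (i-1)),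
          mul_nonneg haN hcBa,
          mul_nonneg (mul_nonneg (mul_nonneg hτH ham) huN) hwamN.le]
      · rw [hrN_upd k]
        linarith [mul_nonneg (mul_nonneg hτH hrN) (by linarith : (0:ℝ) ≤ Vmax - (1 - (a k (i-1) + r k (i-1))) * wr i (i-1)),
          mul_nonneg hrN (by linarith : (0:ℝ) ≤ 1 - τ * H * Vmax),
          mul_nonneg (mul_nonneg (mul_nonneg hτH hrm) huN) hwrmN.le,
          mul_nonneg (mul_nonneg hτ' hAr) huN]
      · rw [haN_upd k, hrN_upd k]
        linarith [mul_nonneg huN (by linarith : (0:ℝ) ≤ 1 - τ * H * Vmax - τ * Ar),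
          mul_nonneg (mul_nonneg hτH huN) (by linarith : (0:ℝ) ≤ Vmax - (a k (i-1) * wa (i-1) i + r k (i-1) * wr (i-1) i)),
          mul_nonneg (mul_nonneg (mul_nonneg hτH haN) hum) hwaNm.le,
          mul_nonneg (mul_nonneg (mul_nonneg hτH hrN) hum) hwrNm.le,
          mul_nonneg (mul_nonneg hτ' hBa) haN]
    · obtain ⟨hai, hri, hρi⟩ := IH i (by omega) (by omega)
      obtain ⟨ham, hrm, hρm⟩ := IH (i-1) (by omega) (by omega)
      obtain ⟨hap, hrp, hρp⟩ := IH (i+1) (by omega) (by omega)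
      have hui : 0 ≤ 1 - (a k i + r k i) := by linarith
      have hum : 0 ≤ 1 - (a k (i-1) + r k (i-1)) := by linarith
      have hup : 0 ≤ 1 - (a k (i+1) + r k (i+1)) := by linarith
      have hwaim := hwa_pos i (i-1) (Or.inr (by omega))
      have hwami := hwa_pos (i-1) i (Or.inl (by omega))
      have hwaip := hwa_pos i (i+1) (Or.inl rfl)
      have hwapi := hwa_pos (i+1) i (Or.inr rfl)
      have hwrim := hwr_pos i (i-1) (Or.inr (by omega))
      have hwrmi := hwr_pos (i-1) i (Or.inl (by omega))
      have hwrip := hwr_pos i (i+1) (Or.inl rfl)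
      have hwrpi := hwr_pos (i+1) i (Or.inr rfl)
      have hwaimV := hwa_le i (i-1) (Or.inr (by omega))
      have hwamiV := hwa_le (i-1) i (Or.inl (by omega))
      have hwaipV := hwa_le i (i+1) (Or.inl rfl)
      have hwapiV := hwa_le (i+1) i (Or.inr rfl)
      have hwrimV := hwr_le i (i-1) (Or.inr (by omega))
      have hwrmiV := hwr_le (i-1) i (Or.inl (by omega))
      have hwripV := hwr_le i (i+1) (Or.inl rfl)
      have hwrpiV := hwr_le (i+1) i (Or.inr rfl)
      have hXam : (1 - (a k (i-1) + r k (i-1))) * wa i (i-1) ≤ Vmax := by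
        have := mul_le_mul (show 1 - (a k (i-1) + r k (i-1)) ≤ 1 by linarith) hwaimV hwaim.le zero_le_one
        linarith
      have hXap : (1 - (a k (i+1) + r k (i+1))) * wa i (i+1) ≤ Vmax := by
        have := mul_le_mul (show 1 - (a k (i+1) + r k (i+1)) ≤ 1 by linarith) hwaipV hwaip.le zero_le_one
        linarith
      have hXrm : (1 - (a k (i-1) + r k (i-1))) * wr i (i-1) ≤ Vmax := by
        have := mul_le_mul (show 1 - (a k (i-1) + r k (i-1)) ≤ 1 by linarith) hwrimV hwrim.le zero_le_one
        linarith
      have hXrp : (1 - (a k (i+1) + r k (i+1))) * wr i (i+1) ≤ Vmax := by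
        have := mul_le_mul (show 1 - (a k (i+1) + r k (i+1)) ≤ 1 by linarith) hwripV hwrip.le zero_le_one
        linarith
      have hSm : a k (i-1) * wa (i-1) i + r k (i-1) * wr (i-1) i ≤ Vmax := by
        have t1 := mul_le_mul_of_nonneg_left hwamiV ham
        have t2 := mul_le_mul_of_nonneg_left hwrmiV hrm
        have t3 := mul_le_mul_of_nonneg_right hρm hVmax.le
        linarith
      have hSp : a k (i+1) * wa (i+1) i + r k (i+1) * wr (i+1) i ≤ Vmax := by
        have t1 := mul_le_mul_of_nonneg_left hwapiV hap
        have t2 := mul_le_mul_of_nonneg_left hwrpiV hrp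
        have t3 := mul_le_mul_of_nonneg_right hρp hVmax.le
        linarith
      refine ⟨?_, ?_, ?_⟩
      · rw [ha_upd k i h2 h3]
        linarith [mul_nonneg (mul_nonneg hτH hai) (by linarith : (0:ℝ) ≤ Vmax - (1 - (a k (i-1) + r k (i-1))) * wa i (i-1)),
          mul_nonneg (mul_nonneg hτH hai) (by linarith : (0:ℝ) ≤ Vmax - (1 - (a k (i+1) + r k (i+1))) * wa i (i+1)),
          mul_nonneg hai h2CFL,
          mul_nonneg (mul_nonneg (mul_nonneg hτH ham) hui) hwami.le,
          mul_nonneg (mul_nonneg (mul_nonneg hτH hap) hui) hwapi.le]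
      · rw [hr_upd k i h2 h3]
        linarith [mul_nonneg (mul_nonneg hτH hri) (by linarith : (0:ℝ) ≤ Vmax - (1 - (a k (i-1) + r k (i-1))) * wr i (i-1)),
          mul_nonneg (mul_nonneg hτH hri) (by linarith : (0:ℝ) ≤ Vmax - (1 - (a k (i+1) + r k (i+1))) * wr i (i+1)),
          mul_nonneg hri h2CFL,
          mul_nonneg (mul_nonneg (mul_nonneg hτH hrm) hui) hwrmi.le,
          mul_nonneg (mul_nonneg (mul_nonneg hτH hrp) hui) hwrpi.le]
      · rw [ha_upd k i h2 h3, hr_upd k i h2 h3]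
        linarith [mul_nonneg hui h2CFL,
          mul_nonneg (mul_nonneg hτH hui) (by linarith : (0:ℝ) ≤ 2 * Vmax - (a k (i-1) * wa (i-1) i + r k (i-1) * wr (i-1) i + a k (i+1) * wa (i+1) i + r k (i+1) * wr (i+1) i)),
          mul_nonneg (mul_nonneg (mul_nonneg hτH hai) hum) hwaim.le,
          mul_nonneg (mul_nonneg (mul_nonneg hτH hri) hum) hwrim.le,
          mul_nonneg (mul_nonneg (mul_nonneg hτH hai) hup) hwaip.le,
          mul_nonneg (mul_nonneg (mul_nonneg hτH hri) hup) hwrip.le]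
end

section
/- Suppose at time step k the lattice states satisfy 0 ≤ a_i^k, 0 ≤ r_i^k and a_i^k + r_i^k ≤ 1 for all sites i = 1,…,N. Then for every interior site i = 2,…,N−1 the explicit Euler update satisfies a_i^{k+1} ≥ (1 − 2τH·V_max)·a_i^k and r_i^{k+1} ≥ (1 − 2τH·V_max)·r_i^k; in particular, if 1 − 2τH·V_max ≥ 0 then a_i^{k+1} ≥ 0 and r_i^{k+1} ≥ 0 at all interior sites. -/
lemma one_species_bound (τ H Vmax : ℝ) (hτ : 0 < τ) (hH : 0 ≤ H) (hVmax : 0 < Vmax)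
    (x0 x1 x2 s0 s1 s2 w10 w01 w12 w21 : ℝ)
    (hx0 : 0 ≤ x0) (hx1 : 0 ≤ x1) (hx2 : 0 ≤ x2)
    (hs0 : 0 ≤ s0) (hs0' : s0 ≤ 1) (hs1 : 0 ≤ s1) (hs1' : s1 ≤ 1)
    (hs2 : 0 ≤ s2) (hs2' : s2 ≤ 1)
    (hw10 : 0 < w10) (hw01 : 0 < w01) (hw12 : 0 < w12) (hw21 : 0 < w21)
    (hw10' : w10 ≤ Vmax) (hw12' : w12 ≤ Vmax) :
    (1 - 2 * τ * H * Vmax) * x1 ≤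
      x1 + τ * H * (-x1 * s0 * w10 + x0 * s1 * w01 - x1 * s2 * w12 + x2 * s1 * w21) := by
  have hτH : 0 ≤ τ * H := mul_nonneg hτ.le hH
  have h1 : x1 * s0 * w10 ≤ x1 * Vmax := by nlinarith [mul_nonneg hx1 (mul_nonneg (sub_nonneg.2 hs0') hw10.le), mul_nonneg hx1 (sub_nonneg.2 hw10')]
  have h2 : x1 * s2 * w12 ≤ x1 * Vmax := by nlinarith [mul_nonneg hx1 (mul_nonneg (sub_nonneg.2 hs2') hw12.le), mul_nonneg hx1 (sub_nonneg.2 hw12')]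
  have h3 : 0 ≤ x0 * s1 * w01 := by positivity
  have h4 : 0 ≤ x2 * s1 * w21 := by positivity
  nlinarith [mul_nonneg hτH (sub_nonneg.2 h1), mul_nonneg hτH (sub_nonneg.2 h2),
    mul_nonneg hτH h3, mul_nonneg hτH h4]


/-- Under the box constraints at time step `k`, the explicit Euler
update of the lattice vesicle-transport scheme satisfies, at every interior site
`i = 2,…,N-1`, the lower bounds `a_i^{k+1} ≥ (1 - 2τH·V_max)·a_i^k` and
`r_i^{k+1} ≥ (1 - 2τH·V_max)·r_i^k`; in particular nonnegativity is preserved at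
interior sites whenever `1 - 2τH·V_max ≥ 0`. -/
theorem interior_positivity_bound
    (N : ℕ) (hN : 3 ≤ N)
    (τ H Vmax : ℝ) (hτ : 0 < τ) (hH : 0 ≤ H) (hVmax : 0 < Vmax)
    (wa wr : ℕ → ℕ → ℝ)
    (hwa_pos : ∀ i j : ℕ, (j = i + 1 ∨ i = j + 1) → 0 < wa i j)
    (hwr_pos : ∀ i j : ℕ, (j = i + 1 ∨ i = j + 1) → 0 < wr i j)
    (hwa_le : ∀ i j : ℕ, (j = i + 1 ∨ i = j + 1) → wa i j ≤ Vmax)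
    (hwr_le : ∀ i j : ℕ, (j = i + 1 ∨ i = j + 1) → wr i j ≤ Vmax)
    (a r a' r' : ℕ → ℝ)
    (ha_nonneg : ∀ i : ℕ, 1 ≤ i → i ≤ N → 0 ≤ a i)
    (hr_nonneg : ∀ i : ℕ, 1 ≤ i → i ≤ N → 0 ≤ r i)
    (hrho_le : ∀ i : ℕ, 1 ≤ i → i ≤ N → a i + r i ≤ 1)
    (ha_upd : ∀ i : ℕ, 2 ≤ i → i ≤ N - 1 →
      a' i = a i + τ * H *
        (-(a i) * (1 - (a (i - 1) + r (i - 1))) * wa i (i - 1)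
          + a (i - 1) * (1 - (a i + r i)) * wa (i - 1) i
          - a i * (1 - (a (i + 1) + r (i + 1))) * wa i (i + 1)
          + a (i + 1) * (1 - (a i + r i)) * wa (i + 1) i))
    (hr_upd : ∀ i : ℕ, 2 ≤ i → i ≤ N - 1 →
      r' i = r i + τ * H *
        (-(r i) * (1 - (a (i - 1) + r (i - 1))) * wr i (i - 1)
          + r (i - 1) * (1 - (a i + r i)) * wr (i - 1) i
          - r i * (1 - (a (i + 1) + r (i + 1))) * wr i (i + 1)
          + r (i + 1) * (1 - (a i + r i)) * wr (i + 1) i)) :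
    ∀ i : ℕ, 2 ≤ i → i ≤ N - 1 →
      ((1 - 2 * τ * H * Vmax) * a i ≤ a' i ∧
        (1 - 2 * τ * H * Vmax) * r i ≤ r' i) ∧
      (0 ≤ 1 - 2 * τ * H * Vmax → 0 ≤ a' i ∧ 0 ≤ r' i) := by

  intro i hi2 hiN
  have hi1 : 1 ≤ i - 1 := by omega
  have hiN1 : i - 1 ≤ N := by omega
  have hi1' : 1 ≤ i := by omega
  have hiN' : i ≤ N := by omega
  have hip1 : 1 ≤ i + 1 := by omega
  have hipN : i + 1 ≤ N := by omega
  have him : i - 1 + 1 = i := by omega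
  have adj1 : (i - 1 = i + 1 ∨ i = (i - 1) + 1) := Or.inr (by omega)
  have adj2 : (i = (i - 1) + 1 ∨ i - 1 = i + 1) := Or.inl (by omega)
  have adj3 : (i + 1 = i + 1 ∨ i = (i + 1) + 1) := Or.inl rfl
  have adj4 : (i = (i + 1) + 1 ∨ i + 1 = i + 1) := Or.inr rfl
  have hs (j : ℕ) (h1 : 1 ≤ j) (h2 : j ≤ N) :
      0 ≤ 1 - (a j + r j) ∧ 1 - (a j + r j) ≤ 1 := by
    constructor
    · linarith [hrho_le j h1 h2]
    · linarith [ha_nonneg j h1 h2, hr_nonneg j h1 h2]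
  obtain ⟨hsm, hsm'⟩ := hs (i-1) hi1 hiN1
  obtain ⟨hsi, hsi'⟩ := hs i hi1' hiN'
  obtain ⟨hsp, hsp'⟩ := hs (i+1) hip1 hipN
  have ha' : (1 - 2 * τ * H * Vmax) * a i ≤ a' i := by
    rw [ha_upd i hi2 hiN]
    exact one_species_bound τ H Vmax hτ hH hVmax (a (i-1)) (a i) (a (i+1)) _ _ _ _ _ _ _
      (ha_nonneg _ hi1 hiN1) (ha_nonneg _ hi1' hiN') (ha_nonneg _ hip1 hipN)
      hsm hsm' hsi hsi' hsp hsp'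
      (hwa_pos _ _ adj1) (hwa_pos _ _ adj2) (hwa_pos _ _ adj3) (hwa_pos _ _ adj4)
      (hwa_le _ _ adj1) (hwa_le _ _ adj3)
  have hr' : (1 - 2 * τ * H * Vmax) * r i ≤ r' i := by
    rw [hr_upd i hi2 hiN]
    exact one_species_bound τ H Vmax hτ hH hVmax (r (i-1)) (r i) (r (i+1)) _ _ _ _ _ _ _
      (hr_nonneg _ hi1 hiN1) (hr_nonneg _ hi1' hiN') (hr_nonneg _ hip1 hipN)
      hsm hsm' hsi hsi' hsp hsp'
      (hwr_pos _ _ adj1) (hwr_pos _ _ adj2) (hwr_pos _ _ adj3) (hwr_pos _ _ adj4)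
      (hwr_le _ _ adj1) (hwr_le _ _ adj3)
  refine ⟨⟨ha', hr'⟩, fun hc => ⟨le_trans (mul_nonneg hc (ha_nonneg _ hi1' hiN')) ha',
    le_trans (mul_nonneg hc (hr_nonneg _ hi1' hiN')) hr'⟩⟩
end

section
/- Suppose at time step k the lattice states satisfy 0 ≤ a_i^k, 0 ≤ r_i^k and a_i^k + r_i^k ≤ 1 for all sites i = 1,…,N. Then for every interior site i = 2,…,N−1 the explicit Euler update satisfies 1 − ρ_i^{k+1} ≥ (1 − 4τH·V_max)·(1 − ρ_i^k), where ρ_i^k := a_i^k + r_i^k; in particular, if 1 − 4τH·V_max ≥ 0 then ρ_i^{k+1} ≤ 1 at all interior sites. -/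
set_option maxHeartbeats 1600000 in
/-- Under the box constraints at time step `k`, the explicit Euler
update of the lattice scheme satisfies, at every interior site `i = 2,…,N-1`,
`1 - ρ_i^{k+1} ≥ (1 - 4τH·V_max)·(1 - ρ_i^k)` where `ρ_i = a_i + r_i`; in
particular, if `1 - 4τH·V_max ≥ 0` then `ρ_i^{k+1} ≤ 1` at all interior sites. -/
theorem interior_density_bound
    (N : ℕ) (hN : 3 ≤ N)
    (τ H Vmax : ℝ) (hτ : 0 < τ) (hH : 0 ≤ H) (hVmax : 0 < Vmax)
    (wa wr : ℕ → ℕ → ℝ)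
    (hwa_pos : ∀ i j : ℕ, (j = i + 1 ∨ i = j + 1) → 0 < wa i j)
    (hwr_pos : ∀ i j : ℕ, (j = i + 1 ∨ i = j + 1) → 0 < wr i j)
    (hwa_le : ∀ i j : ℕ, (j = i + 1 ∨ i = j + 1) → wa i j ≤ Vmax)
    (hwr_le : ∀ i j : ℕ, (j = i + 1 ∨ i = j + 1) → wr i j ≤ Vmax)
    (a r a' r' : ℕ → ℝ)
    (ha_nonneg : ∀ i : ℕ, 1 ≤ i → i ≤ N → 0 ≤ a i)
    (hr_nonneg : ∀ i : ℕ, 1 ≤ i → i ≤ N → 0 ≤ r i)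
    (hrho_le : ∀ i : ℕ, 1 ≤ i → i ≤ N → a i + r i ≤ 1)
    (ha_upd : ∀ i : ℕ, 2 ≤ i → i ≤ N - 1 →
      a' i = a i + τ * H *
        (-(a i) * (1 - (a (i - 1) + r (i - 1))) * wa i (i - 1)
          + a (i - 1) * (1 - (a i + r i)) * wa (i - 1) i
          - a i * (1 - (a (i + 1) + r (i + 1))) * wa i (i + 1)
          + a (i + 1) * (1 - (a i + r i)) * wa (i + 1) i))
    (hr_upd : ∀ i : ℕ, 2 ≤ i → i ≤ N - 1 →
      r' i = r i + τ * H *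
        (-(r i) * (1 - (a (i - 1) + r (i - 1))) * wr i (i - 1)
          + r (i - 1) * (1 - (a i + r i)) * wr (i - 1) i
          - r i * (1 - (a (i + 1) + r (i + 1))) * wr i (i + 1)
          + r (i + 1) * (1 - (a i + r i)) * wr (i + 1) i)) :
    ∀ i : ℕ, 2 ≤ i → i ≤ N - 1 →
      (1 - 4 * τ * H * Vmax) * (1 - (a i + r i)) ≤ 1 - (a' i + r' i) ∧
      (0 ≤ 1 - 4 * τ * H * Vmax → a' i + r' i ≤ 1) := by
  intro i h2 hiN
  have h1m : 1 ≤ i - 1 := by omega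
  have hmN : i - 1 ≤ N := by omega
  have h1i : 1 ≤ i := by omega
  have hiN' : i ≤ N := by omega
  have h1p : 1 ≤ i + 1 := by omega
  have hpN : i + 1 ≤ N := by omega
  have ham := ha_nonneg (i-1) h1m hmN
  have hai := ha_nonneg i h1i hiN'
  have hap := ha_nonneg (i+1) h1p hpN
  have hrm := hr_nonneg (i-1) h1m hmN
  have hri := hr_nonneg i h1i hiN'
  have hrp := hr_nonneg (i+1) h1p hpN
  have hρm := hrho_le (i-1) h1m hmN
  have hρi := hrho_le i h1i hiN'
  have hρp := hrho_le (i+1) h1p hpN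
  have e1 : i = (i - 1) + 1 := by omega
  have hwa_mi := hwa_le (i-1) i (Or.inl e1)
  have hwa_pi := hwa_le (i+1) i (Or.inr rfl)
  have hwr_mi := hwr_le (i-1) i (Or.inl e1)
  have hwr_pi := hwr_le (i+1) i (Or.inr rfl)
  have hwa_im := (hwa_pos i (i-1) (Or.inr e1)).le
  have hwa_ip := (hwa_pos i (i+1) (Or.inl rfl)).le
  have hwr_im := (hwr_pos i (i-1) (Or.inr e1)).le
  have hwr_ip := (hwr_pos i (i+1) (Or.inl rfl)).le
  have hwa_mi' := (hwa_pos (i-1) i (Or.inl e1)).le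
  have hwa_pi' := (hwa_pos (i+1) i (Or.inr rfl)).le
  have hwr_mi' := (hwr_pos (i-1) i (Or.inl e1)).le
  have hwr_pi' := (hwr_pos (i+1) i (Or.inr rfl)).le
  have h1ρi : 0 ≤ 1 - (a i + r i) := by linarith
  have h1ρm : 0 ≤ 1 - (a (i-1) + r (i-1)) := by linarith
  have h1ρp : 0 ≤ 1 - (a (i+1) + r (i+1)) := by linarith
  -- outflow terms nonneg
  have o1 : 0 ≤ a i * (1 - (a (i-1) + r (i-1))) * wa i (i-1) :=
    mul_nonneg (mul_nonneg hai h1ρm) hwa_im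
  have o2 : 0 ≤ a i * (1 - (a (i+1) + r (i+1))) * wa i (i+1) :=
    mul_nonneg (mul_nonneg hai h1ρp) hwa_ip
  have o3 : 0 ≤ r i * (1 - (a (i-1) + r (i-1))) * wr i (i-1) :=
    mul_nonneg (mul_nonneg hri h1ρm) hwr_im
  have o4 : 0 ≤ r i * (1 - (a (i+1) + r (i+1))) * wr i (i+1) :=
    mul_nonneg (mul_nonneg hri h1ρp) hwr_ip
  -- inflow terms bounded
  have c1 : a (i-1) * wa (i-1) i ≤ Vmax := by
    have h := mul_le_mul_of_nonneg_right (show a (i-1) ≤ 1 by linarith) hwa_mi'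
    rw [one_mul] at h; linarith
  have c2 : a (i+1) * wa (i+1) i ≤ Vmax := by
    have h := mul_le_mul_of_nonneg_right (show a (i+1) ≤ 1 by linarith) hwa_pi'
    rw [one_mul] at h; linarith
  have c3 : r (i-1) * wr (i-1) i ≤ Vmax := by
    have h := mul_le_mul_of_nonneg_right (show r (i-1) ≤ 1 by linarith) hwr_mi'
    rw [one_mul] at h; linarith
  have c4 : r (i+1) * wr (i+1) i ≤ Vmax := by
    have h := mul_le_mul_of_nonneg_right (show r (i+1) ≤ 1 by linarith) hwr_pi'
    rw [one_mul] at h; linarith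
  have b1 : a (i-1) * (1 - (a i + r i)) * wa (i-1) i ≤ Vmax * (1 - (a i + r i)) := by
    calc a (i-1) * (1 - (a i + r i)) * wa (i-1) i
        = a (i-1) * wa (i-1) i * (1 - (a i + r i)) := by ring
      _ ≤ Vmax * (1 - (a i + r i)) := mul_le_mul_of_nonneg_right c1 h1ρi
  have b2 : a (i+1) * (1 - (a i + r i)) * wa (i+1) i ≤ Vmax * (1 - (a i + r i)) := by
    calc a (i+1) * (1 - (a i + r i)) * wa (i+1) i
        = a (i+1) * wa (i+1) i * (1 - (a i + r i)) := by ring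
      _ ≤ Vmax * (1 - (a i + r i)) := mul_le_mul_of_nonneg_right c2 h1ρi
  have b3 : r (i-1) * (1 - (a i + r i)) * wr (i-1) i ≤ Vmax * (1 - (a i + r i)) := by
    calc r (i-1) * (1 - (a i + r i)) * wr (i-1) i
        = r (i-1) * wr (i-1) i * (1 - (a i + r i)) := by ring
      _ ≤ Vmax * (1 - (a i + r i)) := mul_le_mul_of_nonneg_right c3 h1ρi
  have b4 : r (i+1) * (1 - (a i + r i)) * wr (i+1) i ≤ Vmax * (1 - (a i + r i)) := by
    calc r (i+1) * (1 - (a i + r i)) * wr (i+1) i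
        = r (i+1) * wr (i+1) i * (1 - (a i + r i)) := by ring
      _ ≤ Vmax * (1 - (a i + r i)) := mul_le_mul_of_nonneg_right c4 h1ρi
  have key : (-(a i) * (1 - (a (i - 1) + r (i - 1))) * wa i (i - 1)
          + a (i - 1) * (1 - (a i + r i)) * wa (i - 1) i
          - a i * (1 - (a (i + 1) + r (i + 1))) * wa i (i + 1)
          + a (i + 1) * (1 - (a i + r i)) * wa (i + 1) i)
        + (-(r i) * (1 - (a (i - 1) + r (i - 1))) * wr i (i - 1)
          + r (i - 1) * (1 - (a i + r i)) * wr (i - 1) i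
          - r i * (1 - (a (i + 1) + r (i + 1))) * wr i (i + 1)
          + r (i + 1) * (1 - (a i + r i)) * wr (i + 1) i)
        ≤ 4 * Vmax * (1 - (a i + r i)) := by linarith
  have hτH : 0 ≤ τ * H := mul_nonneg hτ.le hH
  have main : (1 - 4 * τ * H * Vmax) * (1 - (a i + r i)) ≤ 1 - (a' i + r' i) := by
    rw [ha_upd i h2 hiN, hr_upd i h2 hiN]
    have hmul := mul_le_mul_of_nonneg_left key hτH
    ring_nf at hmul ⊢
    linarith
  refine ⟨main, fun hfac => ?_⟩
  have := mul_nonneg hfac h1ρi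
  linarith
end

section
/- Suppose at time step k the lattice states satisfy 0 ≤ a_i^k, 0 ≤ r_i^k and a_i^k + r_i^k ≤ 1 for all sites i = 1,…,N. Then the explicit Euler update at the boundary sites with inflow satisfies 1 − ρ_1^{k+1} ≥ (1 − 2τH·V_max − τA_a)·(1 − ρ_1^k) and 1 − ρ_N^{k+1} ≥ (1 − 2τH·V_max − τA_r)·(1 − ρ_N^k), where ρ_i^k := a_i^k + r_i^k; in particular, if 1 − 2τH·V_max − τ·max(A_a, A_r) ≥ 0 then ρ_1^{k+1} ≤ 1 and ρ_N^{k+1} ≤ 1. -/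
set_option maxHeartbeats 1000000


/-- Under the box constraints at time step `k`, the explicit Euler
update at the boundary sites with inflow satisfies
`1 - ρ_1^{k+1} ≥ (1 - 2τH·V_max - τA_a)·(1 - ρ_1^k)` and
`1 - ρ_N^{k+1} ≥ (1 - 2τH·V_max - τA_r)·(1 - ρ_N^k)` where `ρ_i = a_i + r_i`;
in particular, if `1 - 2τH·V_max - τ·max(A_a, A_r) ≥ 0` then `ρ_1^{k+1} ≤ 1`
and `ρ_N^{k+1} ≤ 1`. -/
theorem inflow_boundary_density_bound
    (N : ℕ) (hN : 3 ≤ N)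
    (τ H Vmax : ℝ) (hτ : 0 < τ) (hH : 0 ≤ H) (hVmax : 0 < Vmax)
    (Aa Ar Ba Br : ℝ) (hAa : 0 ≤ Aa) (hAr : 0 ≤ Ar) (hBa : 0 ≤ Ba) (hBr : 0 ≤ Br)
    (wa wr : ℕ → ℕ → ℝ)
    (hwa_pos : ∀ i j : ℕ, (j = i + 1 ∨ i = j + 1) → 0 < wa i j)
    (hwr_pos : ∀ i j : ℕ, (j = i + 1 ∨ i = j + 1) → 0 < wr i j)
    (hwa_le : ∀ i j : ℕ, (j = i + 1 ∨ i = j + 1) → wa i j ≤ Vmax)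
    (hwr_le : ∀ i j : ℕ, (j = i + 1 ∨ i = j + 1) → wr i j ≤ Vmax)
    (a r a' r' : ℕ → ℝ)
    (ha_nonneg : ∀ i : ℕ, 1 ≤ i → i ≤ N → 0 ≤ a i)
    (hr_nonneg : ∀ i : ℕ, 1 ≤ i → i ≤ N → 0 ≤ r i)
    (hrho_le : ∀ i : ℕ, 1 ≤ i → i ≤ N → a i + r i ≤ 1)
    (ha1_upd :
      a' 1 = a 1 + τ *
        (H * (-(a 1) * (1 - (a 2 + r 2)) * wa 1 2
          + a 2 * (1 - (a 1 + r 1)) * wa 2 1)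
          + Aa * (1 - (a 1 + r 1))))
    (haN_upd :
      a' N = a N + τ *
        (H * (-(a N) * (1 - (a (N - 1) + r (N - 1))) * wa N (N - 1)
          + a (N - 1) * (1 - (a N + r N)) * wa (N - 1) N)
          - Ba * a N))
    (hr1_upd :
      r' 1 = r 1 + τ *
        (H * (-(r 1) * (1 - (a 2 + r 2)) * wr 1 2
          + r 2 * (1 - (a 1 + r 1)) * wr 2 1)
          - Br * r 1))
    (hrN_upd :
      r' N = r N + τ *
        (H * (-(r N) * (1 - (a (N - 1) + r (N - 1))) * wr N (N - 1)
          + r (N - 1) * (1 - (a N + r N)) * wr (N - 1) N)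
          + Ar * (1 - (a N + r N)))) :
    ((1 - 2 * τ * H * Vmax - τ * Aa) * (1 - (a 1 + r 1)) ≤ 1 - (a' 1 + r' 1) ∧
      (1 - 2 * τ * H * Vmax - τ * Ar) * (1 - (a N + r N)) ≤ 1 - (a' N + r' N)) ∧
    (0 ≤ 1 - 2 * τ * H * Vmax - τ * max Aa Ar →
      a' 1 + r' 1 ≤ 1 ∧ a' N + r' N ≤ 1) := by
  have hτH : 0 ≤ τ * H := mul_nonneg hτ.le hH
  -- indices
  have h1N : 1 ≤ N := by omega
  have h2N : 2 ≤ N := by omega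
  have hM1 : 1 ≤ N - 1 := by omega
  have hMN : N - 1 ≤ N := by omega
  have hNsucc : N = (N - 1) + 1 := by omega
  have ha1 := ha_nonneg 1 le_rfl h1N
  have hr1 := hr_nonneg 1 le_rfl h1N
  have ha2 := ha_nonneg 2 (by omega) h2N
  have hr2 := hr_nonneg 2 (by omega) h2N
  have haN := ha_nonneg N h1N le_rfl
  have hrN := hr_nonneg N h1N le_rfl
  have haM := ha_nonneg (N-1) hM1 hMN
  have hrM := hr_nonneg (N-1) hM1 hMN
  have hρ1 : 0 ≤ 1 - (a 1 + r 1) := by linarith [hrho_le 1 le_rfl h1N]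
  have hρ2 : 0 ≤ 1 - (a 2 + r 2) := by linarith [hrho_le 2 (by omega) h2N]
  have hρN : 0 ≤ 1 - (a N + r N) := by linarith [hrho_le N h1N le_rfl]
  have hρM : 0 ≤ 1 - (a (N-1) + r (N-1)) := by linarith [hrho_le (N-1) hM1 hMN]
  -- site 1 bound
  have hwa21 := hwa_le 2 1 (Or.inr rfl)
  have hwr21 := hwr_le 2 1 (Or.inr rfl)
  have hwa12p := (hwa_pos 1 2 (Or.inl rfl)).le
  have hwr12p := (hwr_pos 1 2 (Or.inl rfl)).le
  have hsum1 : a 2 * wa 2 1 + r 2 * wr 2 1 ≤ 2 * Vmax := by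
    nlinarith [mul_le_mul_of_nonneg_left hwa21 ha2, mul_le_mul_of_nonneg_left hwr21 hr2,
      mul_nonneg hρ2 hVmax.le]
  have hD1 : τ * H * ((a 2 * wa 2 1 + r 2 * wr 2 1) * (1 - (a 1 + r 1)))
      ≤ τ * H * (2 * Vmax * (1 - (a 1 + r 1))) :=
    mul_le_mul_of_nonneg_left (mul_le_mul_of_nonneg_right hsum1 hρ1) hτH
  have key1 : (1 - 2 * τ * H * Vmax - τ * Aa) * (1 - (a 1 + r 1)) ≤ 1 - (a' 1 + r' 1) := by
    have hex : 1 - (a' 1 + r' 1) - (1 - 2 * τ * H * Vmax - τ * Aa) * (1 - (a 1 + r 1))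
        = τ * H * (a 1 * (1 - (a 2 + r 2)) * wa 1 2)
          + τ * H * (r 1 * (1 - (a 2 + r 2)) * wr 1 2)
          + τ * (Br * r 1)
          + (τ * H * (2 * Vmax * (1 - (a 1 + r 1)))
            - τ * H * ((a 2 * wa 2 1 + r 2 * wr 2 1) * (1 - (a 1 + r 1)))) := by
      rw [ha1_upd, hr1_upd]; ring
    linarith [mul_nonneg hτH (mul_nonneg (mul_nonneg ha1 hρ2) hwa12p),
      mul_nonneg hτH (mul_nonneg (mul_nonneg hr1 hρ2) hwr12p),
      mul_nonneg hτ.le (mul_nonneg hBr hr1), hD1, hex]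
  -- site N bound
  have hwaMN := hwa_le (N-1) N (Or.inl hNsucc)
  have hwrMN := hwr_le (N-1) N (Or.inl hNsucc)
  have hwaNMp := (hwa_pos N (N-1) (Or.inr hNsucc)).le
  have hwrNMp := (hwr_pos N (N-1) (Or.inr hNsucc)).le
  have hsumN : a (N-1) * wa (N-1) N + r (N-1) * wr (N-1) N ≤ 2 * Vmax := by
    nlinarith [mul_le_mul_of_nonneg_left hwaMN haM, mul_le_mul_of_nonneg_left hwrMN hrM,
      mul_nonneg hρM hVmax.le]
  have hDN : τ * H * ((a (N-1) * wa (N-1) N + r (N-1) * wr (N-1) N) * (1 - (a N + r N)))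
      ≤ τ * H * (2 * Vmax * (1 - (a N + r N))) :=
    mul_le_mul_of_nonneg_left (mul_le_mul_of_nonneg_right hsumN hρN) hτH
  have keyN : (1 - 2 * τ * H * Vmax - τ * Ar) * (1 - (a N + r N)) ≤ 1 - (a' N + r' N) := by
    have hex : 1 - (a' N + r' N) - (1 - 2 * τ * H * Vmax - τ * Ar) * (1 - (a N + r N))
        = τ * H * (a N * (1 - (a (N-1) + r (N-1))) * wa N (N-1))
          + τ * H * (r N * (1 - (a (N-1) + r (N-1))) * wr N (N-1))
          + τ * (Ba * a N)
          + (τ * H * (2 * Vmax * (1 - (a N + r N)))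
            - τ * H * ((a (N-1) * wa (N-1) N + r (N-1) * wr (N-1) N) * (1 - (a N + r N)))) := by
      rw [haN_upd, hrN_upd]; ring
    linarith [mul_nonneg hτH (mul_nonneg (mul_nonneg haN hρM) hwaNMp),
      mul_nonneg hτH (mul_nonneg (mul_nonneg hrN hρM) hwrNMp),
      mul_nonneg hτ.le (mul_nonneg hBa haN), hDN, hex]
  refine ⟨⟨key1, keyN⟩, fun hc => ?_⟩
  have hAa' : 0 ≤ 1 - 2 * τ * H * Vmax - τ * Aa := by
    have : τ * Aa ≤ τ * max Aa Ar := mul_le_mul_of_nonneg_left (le_max_left _ _) hτ.le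
    linarith
  have hAr' : 0 ≤ 1 - 2 * τ * H * Vmax - τ * Ar := by
    have : τ * Ar ≤ τ * max Aa Ar := mul_le_mul_of_nonneg_left (le_max_right _ _) hτ.le
    linarith
  constructor
  · linarith [mul_nonneg hAa' hρ1, key1]
  · linarith [mul_nonneg hAr' hρN, keyN]
end

section
/- For any lattice states a^k, r^k : {1,…,N} → ℝ (no sign or density constraints required), the hopping contributions of the explicit Euler scheme cancel in the total lattice sums: Σ_{i=1}^N a_i^{k+1} = Σ_{i=1}^N a_i^k + τ·(A_a(1−ρ_1^k) − B_a a_N^k) and Σ_{i=1}^N r_i^{k+1} = Σ_{i=1}^N r_i^k + τ·(A_r(1−ρ_N^k) − B_r r_1^k), i.e. the total lattice mass changes only through the boundary influx and outflux terms. -/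
lemma sum_telescope_aux (N : ℕ) (hN : 3 ≤ N) (τ : ℝ) (f f' J : ℕ → ℝ) (S1 SN : ℝ)
    (h1 : f' 1 = f 1 + τ * (-(J 1) + S1))
    (hNe : f' N = f N + τ * (J (N - 1) + SN))
    (hint : ∀ i : ℕ, 2 ≤ i → i ≤ N - 1 → f' i = f i + τ * (J (i - 1) - J i)) :
    (∑ i ∈ Finset.Icc 1 N, f' i) = (∑ i ∈ Finset.Icc 1 N, f i) + τ * (S1 + SN) := by
  have hsplit : ∀ g : ℕ → ℝ, (∑ i ∈ Finset.Icc 1 N, g i)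
      = g 1 + g N + ∑ i ∈ Finset.Icc 2 (N - 1), g i := by
    intro g
    have h1 : Finset.Icc 1 N = insert 1 (insert N (Finset.Icc 2 (N - 1))) := by
      ext x; simp [Finset.mem_Icc]; omega
    rw [h1, Finset.sum_insert (by simp [Finset.mem_Icc]; omega),
      Finset.sum_insert (by simp [Finset.mem_Icc]; omega)]
    ring
  have hmid : (∑ i ∈ Finset.Icc 2 (N - 1), f' i)
      = (∑ i ∈ Finset.Icc 2 (N - 1), f i) + τ * (J 1 - J (N - 1)) := by
    have h2 : (∑ i ∈ Finset.Icc 2 (N - 1), (f' i - f i))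
        = ∑ i ∈ Finset.Icc 2 (N - 1), τ * (J (i - 1) - J i) := by
      apply Finset.sum_congr rfl
      intro i hi
      simp only [Finset.mem_Icc] at hi
      rw [hint i hi.1 hi.2]; ring
    have h3 : (∑ i ∈ Finset.Icc 2 (N - 1), τ * (J (i - 1) - J i))
        = τ * (J 1 - J (N - 1)) := by
      rw [← Finset.mul_sum]
      congr 1
      have hIco : Finset.Icc 2 (N - 1) = Finset.Ico 2 N := by
        ext x; simp [Finset.mem_Icc, Finset.mem_Ico]; omega
      rw [hIco, Finset.sum_Ico_eq_sum_range]
      have hr : ∀ k ∈ Finset.range (N - 2), J (2 + k - 1) - J (2 + k)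
          = -(J (k + 1 + 1) - J (k + 1)) := by
        intro k _
        have h' : 2 + k - 1 = k + 1 := by omega
        have h'' : 2 + k = k + 1 + 1 := by omega
        rw [h', h'']; ring
      rw [Finset.sum_congr rfl hr, Finset.sum_neg_distrib, Finset.sum_range_sub (fun k => J (k + 1))]
      have h0 : N - 2 + 1 = N - 1 := by omega
      rw [h0]; ring
    rw [Finset.sum_sub_distrib] at h2
    linarith [h2, h3]
  rw [hsplit f', hsplit f, h1, hNe, hmid]
  ring



/-- For arbitrary lattice states (no sign or density constraints),
the hopping contributions of the explicit Euler scheme cancel in the total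
lattice sums, so that the total lattice mass of each species changes only
through the boundary influx and outflux terms. -/
theorem lattice_mass_balance
    (N : ℕ) (hN : 3 ≤ N)
    (τ H : ℝ) (hτ : 0 < τ) (hH : 0 ≤ H)
    (Aa Ar Ba Br : ℝ) (hAa : 0 ≤ Aa) (hAr : 0 ≤ Ar) (hBa : 0 ≤ Ba) (hBr : 0 ≤ Br)
    (wa wr : ℕ → ℕ → ℝ)
    (hwa_pos : ∀ i j : ℕ, (j = i + 1 ∨ i = j + 1) → 0 < wa i j)
    (hwr_pos : ∀ i j : ℕ, (j = i + 1 ∨ i = j + 1) → 0 < wr i j)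
    (a r a' r' : ℕ → ℝ)
    (ha_upd : ∀ i : ℕ, 2 ≤ i → i ≤ N - 1 →
      a' i = a i + τ * H *
        (-(a i) * (1 - (a (i - 1) + r (i - 1))) * wa i (i - 1)
          + a (i - 1) * (1 - (a i + r i)) * wa (i - 1) i
          - a i * (1 - (a (i + 1) + r (i + 1))) * wa i (i + 1)
          + a (i + 1) * (1 - (a i + r i)) * wa (i + 1) i))
    (hr_upd : ∀ i : ℕ, 2 ≤ i → i ≤ N - 1 →
      r' i = r i + τ * H *
        (-(r i) * (1 - (a (i - 1) + r (i - 1))) * wr i (i - 1)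
          + r (i - 1) * (1 - (a i + r i)) * wr (i - 1) i
          - r i * (1 - (a (i + 1) + r (i + 1))) * wr i (i + 1)
          + r (i + 1) * (1 - (a i + r i)) * wr (i + 1) i))
    (ha1_upd :
      a' 1 = a 1 + τ *
        (H * (-(a 1) * (1 - (a 2 + r 2)) * wa 1 2
          + a 2 * (1 - (a 1 + r 1)) * wa 2 1)
          + Aa * (1 - (a 1 + r 1))))
    (haN_upd :
      a' N = a N + τ *
        (H * (-(a N) * (1 - (a (N - 1) + r (N - 1))) * wa N (N - 1)
          + a (N - 1) * (1 - (a N + r N)) * wa (N - 1) N)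
          - Ba * a N))
    (hr1_upd :
      r' 1 = r 1 + τ *
        (H * (-(r 1) * (1 - (a 2 + r 2)) * wr 1 2
          + r 2 * (1 - (a 1 + r 1)) * wr 2 1)
          - Br * r 1))
    (hrN_upd :
      r' N = r N + τ *
        (H * (-(r N) * (1 - (a (N - 1) + r (N - 1))) * wr N (N - 1)
          + r (N - 1) * (1 - (a N + r N)) * wr (N - 1) N)
          + Ar * (1 - (a N + r N)))) :
    (∑ i ∈ Finset.Icc 1 N, a' i) =
      (∑ i ∈ Finset.Icc 1 N, a i) + τ * (Aa * (1 - (a 1 + r 1)) - Ba * a N) ∧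
    (∑ i ∈ Finset.Icc 1 N, r' i) =
      (∑ i ∈ Finset.Icc 1 N, r i) + τ * (Ar * (1 - (a N + r N)) - Br * r 1) := by
  
  constructor
  · have key := sum_telescope_aux N hN τ a a'
      (fun i => H * (a i * (1 - (a (i + 1) + r (i + 1))) * wa i (i + 1)
        - a (i + 1) * (1 - (a i + r i)) * wa (i + 1) i))
      (Aa * (1 - (a 1 + r 1))) (-(Ba * a N)) ?_ ?_ ?_
    · rw [key]; ring
    · rw [ha1_upd]; ring
    · have hN1 : N - 1 + 1 = N := by omega
      simp only [hN1]
      rw [haN_upd]; ring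
    · intro i h2 hle
      obtain ⟨j, rfl⟩ : ∃ j, i = j + 2 := ⟨i - 2, by omega⟩
      have e1 : j + 2 - 1 = j + 1 := rfl
      simp only [e1]
      rw [ha_upd (j + 2) h2 hle]
      simp only [e1]
      ring
  · have key := sum_telescope_aux N hN τ r r'
      (fun i => H * (r i * (1 - (a (i + 1) + r (i + 1))) * wr i (i + 1)
        - r (i + 1) * (1 - (a i + r i)) * wr (i + 1) i))
      (-(Br * r 1)) (Ar * (1 - (a N + r N))) ?_ ?_ ?_
    · rw [key]; ring
    · rw [hr1_upd]; ring
    · have hN1 : N - 1 + 1 = N := by omega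
      simp only [hN1]
      rw [hrN_upd]; ring
    · intro i h2 hle
      obtain ⟨j, rfl⟩ : ∃ j, i = j + 2 := ⟨i - 2, by omega⟩
      have e1 : j + 2 - 1 = j + 1 := rfl
      simp only [e1]
      rw [hr_upd (j + 2) h2 hle]
      simp only [e1]
      ring
end

section
/- Augment the explicit Euler lattice scheme, for a grid width h > 0, by the pool updates Λ_N^{k+1} = Λ_N^k + τh·(B_a a_N^k − A_r(1−ρ_N^k)) and Λ_som^{k+1} = Λ_som^k + τh·(B_r r_1^k − A_a(1−ρ_1^k)). Then the total mass of the fully discrete system is exactly conserved: for every k ≥ 0, h·Σ_{i=1}^N (a_i^k + r_i^k) + Λ_N^k + Λ_som^k = h·Σ_{i=1}^N (a_i^0 + r_i^0) + Λ_N^0 + Λ_som^0. -/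
private lemma tele_aux (g : ℕ → ℝ) : ∀ m : ℕ, 1 ≤ m →
    ∑ i ∈ Finset.Icc 2 m, (g (i - 1) - g i) = g 1 - g m := by
  intro m hm
  induction m with
  | zero => omega
  | succ n ih =>
    rcases Nat.lt_or_ge n 1 with h | hn
    · have : n = 0 := by omega
      subst this; simp
    · rw [Finset.sum_Icc_succ_top (by omega : 2 ≤ n + 1), ih hn]
      simp only [Nat.add_sub_cancel]
      ring

/-- Augmenting the explicit Euler lattice scheme (grid width `h`)
by the pool updates
`Λ_N^{k+1} = Λ_N^k + τh·(B_a a_N^k - A_r(1-ρ_N^k))` and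
`Λ_som^{k+1} = Λ_som^k + τh·(B_r r_1^k - A_a(1-ρ_1^k))`,
the total mass `h·Σ_i (a_i^k + r_i^k) + Λ_N^k + Λ_som^k` of the fully discrete
system is exactly conserved for every time step `k`. -/
theorem discrete_total_mass_conservation
    (N : ℕ) (hN : 3 ≤ N)
    (τ h H : ℝ) (hτ : 0 < τ) (hh : 0 < h) (hH : 0 ≤ H)
    (Aa Ar Ba Br : ℝ) (hAa : 0 ≤ Aa) (hAr : 0 ≤ Ar) (hBa : 0 ≤ Ba) (hBr : 0 ≤ Br)
    (wa wr : ℕ → ℕ → ℝ)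
    (hwa_pos : ∀ i j : ℕ, (j = i + 1 ∨ i = j + 1) → 0 < wa i j)
    (hwr_pos : ∀ i j : ℕ, (j = i + 1 ∨ i = j + 1) → 0 < wr i j)
    (a r : ℕ → ℕ → ℝ) (ΛN Λsom : ℕ → ℝ)
    (ha_upd : ∀ k : ℕ, ∀ i : ℕ, 2 ≤ i → i ≤ N - 1 →
      a (k + 1) i = a k i + τ * H *
        (-(a k i) * (1 - (a k (i - 1) + r k (i - 1))) * wa i (i - 1)
          + a k (i - 1) * (1 - (a k i + r k i)) * wa (i - 1) i
          - a k i * (1 - (a k (i + 1) + r k (i + 1))) * wa i (i + 1)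
          + a k (i + 1) * (1 - (a k i + r k i)) * wa (i + 1) i))
    (hr_upd : ∀ k : ℕ, ∀ i : ℕ, 2 ≤ i → i ≤ N - 1 →
      r (k + 1) i = r k i + τ * H *
        (-(r k i) * (1 - (a k (i - 1) + r k (i - 1))) * wr i (i - 1)
          + r k (i - 1) * (1 - (a k i + r k i)) * wr (i - 1) i
          - r k i * (1 - (a k (i + 1) + r k (i + 1))) * wr i (i + 1)
          + r k (i + 1) * (1 - (a k i + r k i)) * wr (i + 1) i))
    (ha1_upd : ∀ k : ℕ,
      a (k + 1) 1 = a k 1 + τ *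
        (H * (-(a k 1) * (1 - (a k 2 + r k 2)) * wa 1 2
          + a k 2 * (1 - (a k 1 + r k 1)) * wa 2 1)
          + Aa * (1 - (a k 1 + r k 1))))
    (haN_upd : ∀ k : ℕ,
      a (k + 1) N = a k N + τ *
        (H * (-(a k N) * (1 - (a k (N - 1) + r k (N - 1))) * wa N (N - 1)
          + a k (N - 1) * (1 - (a k N + r k N)) * wa (N - 1) N)
          - Ba * a k N))
    (hr1_upd : ∀ k : ℕ,
      r (k + 1) 1 = r k 1 + τ *
        (H * (-(r k 1) * (1 - (a k 2 + r k 2)) * wr 1 2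
          + r k 2 * (1 - (a k 1 + r k 1)) * wr 2 1)
          - Br * r k 1))
    (hrN_upd : ∀ k : ℕ,
      r (k + 1) N = r k N + τ *
        (H * (-(r k N) * (1 - (a k (N - 1) + r k (N - 1))) * wr N (N - 1)
          + r k (N - 1) * (1 - (a k N + r k N)) * wr (N - 1) N)
          + Ar * (1 - (a k N + r k N))))
    -- pool updates
    (hΛN_upd : ∀ k : ℕ,
      ΛN (k + 1) = ΛN k + τ * h * (Ba * a k N - Ar * (1 - (a k N + r k N))))
    (hΛsom_upd : ∀ k : ℕ,
      Λsom (k + 1) = Λsom k + τ * h * (Br * r k 1 - Aa * (1 - (a k 1 + r k 1)))) :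
    ∀ k : ℕ,
      h * (∑ i ∈ Finset.Icc 1 N, (a k i + r k i)) + ΛN k + Λsom k =
        h * (∑ i ∈ Finset.Icc 1 N, (a 0 i + r 0 i)) + ΛN 0 + Λsom 0 := by
 
  obtain ⟨M, rfl, hM2⟩ : ∃ M, N = M + 1 ∧ 2 ≤ M := ⟨N - 1, by omega, by omega⟩
  simp only [Nat.add_sub_cancel] at haN_upd hrN_upd
  intro k
  induction k with
  | zero => rfl
  | succ k ih =>
    have split : ∀ f : ℕ → ℝ, Finset.sum (Finset.Icc 1 (M + 1)) f =
        f 1 + Finset.sum (Finset.Icc 2 M) f + f (M + 1) := by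
      intro f
      rw [Finset.sum_Icc_succ_top (by omega : 1 ≤ M + 1)]
      have h1 : Finset.Icc 1 M = insert 1 (Finset.Icc 2 M) := by
        ext x; simp only [Finset.mem_Icc, Finset.mem_insert]; omega
      rw [h1, Finset.sum_insert (by simp)]
    set G : ℕ → ℝ := fun i => τ * H *
      ((a k i * (1 - (a k (i + 1) + r k (i + 1))) * wa i (i + 1)
          - a k (i + 1) * (1 - (a k i + r k i)) * wa (i + 1) i)
        + (r k i * (1 - (a k (i + 1) + r k (i + 1))) * wr i (i + 1)
          - r k (i + 1) * (1 - (a k i + r k i)) * wr (i + 1) i)) with hG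
    have hsum : ∑ i ∈ Finset.Icc 1 (M + 1), (a (k + 1) i + r (k + 1) i)
        = ∑ i ∈ Finset.Icc 1 (M + 1), (a k i + r k i)
          + τ * (Aa * (1 - (a k 1 + r k 1)) - Br * r k 1
            + Ar * (1 - (a k (M + 1) + r k (M + 1))) - Ba * a k (M + 1)) := by
      rw [split, split]
      have mid : ∑ i ∈ Finset.Icc 2 M, (a (k + 1) i + r (k + 1) i)
          = ∑ i ∈ Finset.Icc 2 M, ((a k i + r k i) + (G (i - 1) - G i)) := by
        apply Finset.sum_congr rfl
        intro i hi
        simp only [Finset.mem_Icc] at hi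
        rw [ha_upd k i hi.1 (by omega), hr_upd k i hi.1 (by omega)]
        have e : i - 1 + 1 = i := by omega
        simp only [hG, e]
        ring
      rw [mid, Finset.sum_add_distrib, tele_aux G M (by omega),
        ha1_upd k, hr1_upd k, haN_upd k, hrN_upd k]
      simp only [hG]
      ring
    rw [← ih, hsum, hΛN_upd k, hΛsom_upd k]
    ring
end

section
/- Let c ∈ ℝ and let a, r, V : ℝ → ℝ be twice continuously differentiable; set ρ := a + r. For x ∈ ℝ and h > 0 define the lattice hopping operator F_h(x) := −a(x)(1−ρ(x−h))·exp(−c(V(x)−V(x−h))) + a(x−h)(1−ρ(x))·exp(−c(V(x−h)−V(x))) − a(x)(1−ρ(x+h))·exp(−c(V(x)−V(x+h))) + a(x+h)(1−ρ(x))·exp(−c(V(x+h)−V(x))). Then as h → 0⁺, F_h(x)/h² converges to (1−ρ(x))·a''(x) + a(x)·ρ''(x) − 2c·(a'(x)(1−ρ(x))V'(x) − a(x)ρ'(x)V'(x) + a(x)(1−ρ(x))V''(x)); that is, the discrete lattice dynamics are consistent with a nonlinear cross-diffusion–drift operator in divergence form. -/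
open Real Filter

/-- one half of the (even) hopping operator, as a function of the step `h`. -/
noncomputable def lcG (c : ℝ) (a r V : ℝ → ℝ) (x h : ℝ) : ℝ :=
  -(a x) * ((1 - (a (x + h) + r (x + h))) * Real.exp (c * (V (x + h) - V x)))
  + (1 - (a x + r x)) * (a (x + h) * Real.exp (-c * (V (x + h) - V x)))

/-- first derivative of `lcG` in `h`. -/
noncomputable def lcG1 (c : ℝ) (a r V : ℝ → ℝ) (x t : ℝ) : ℝ :=
  -(a x) * (-(deriv a (x + t) + deriv r (x + t)) * Real.exp (c * (V (x + t) - V x))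
      + (1 - (a (x + t) + r (x + t))) * (Real.exp (c * (V (x + t) - V x)) * (c * deriv V (x + t))))
  + (1 - (a x + r x)) * (deriv a (x + t) * Real.exp (-c * (V (x + t) - V x))
      + a (x + t) * (Real.exp (-c * (V (x + t) - V x)) * (-c * deriv V (x + t))))

/-- second derivative of `lcG` in `h`. -/
noncomputable def lcG2 (c : ℝ) (a r V : ℝ → ℝ) (x t : ℝ) : ℝ :=
  -(a x) * Real.exp (c * (V (x + t) - V x)) *
      (-(deriv (deriv a) (x + t) + deriv (deriv r) (x + t))
        - 2 * (deriv a (x + t) + deriv r (x + t)) * (c * deriv V (x + t))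
        + (1 - (a (x + t) + r (x + t))) *
            ((c * deriv V (x + t)) * (c * deriv V (x + t)) + c * deriv (deriv V) (x + t)))
  + (1 - (a x + r x)) * Real.exp (-c * (V (x + t) - V x)) *
      (deriv (deriv a) (x + t)
        - 2 * deriv a (x + t) * (c * deriv V (x + t))
        + a (x + t) *
            ((c * deriv V (x + t)) * (c * deriv V (x + t)) - c * deriv (deriv V) (x + t)))

lemma lc_shift {f : ℝ → ℝ} (hf : Differentiable ℝ f) (x t : ℝ) :
    HasDerivAt (fun h => f (x + h)) (deriv f (x + t)) t := by
  simpa [Function.comp_def] using ((hf (x + t)).hasDerivAt).comp t ((hasDerivAt_id t).const_add x)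

lemma lc_exp (k : ℝ) {V : ℝ → ℝ} (hV : Differentiable ℝ V) (x t : ℝ) :
    HasDerivAt (fun h => Real.exp (k * (V (x + h) - V x)))
      (Real.exp (k * (V (x + t) - V x)) * (k * deriv V (x + t))) t := by
  simpa using (((lc_shift hV x t).sub_const (V x)).const_mul k).exp

lemma lcG_deriv (c : ℝ) (a r V : ℝ → ℝ) (hA : Differentiable ℝ a)
    (hR : Differentiable ℝ r) (hVd : Differentiable ℝ V) (x t : ℝ) :
    HasDerivAt (lcG c a r V x) (lcG1 c a r V x t) t := by
  have hE := lc_exp c hVd x t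
  have hF := lc_exp (-c) hVd x t
  have hq : HasDerivAt (fun h => 1 - (a (x + h) + r (x + h)))
      (-(deriv a (x + t) + deriv r (x + t))) t :=
    ((lc_shift hA x t).add (lc_shift hR x t)).const_sub 1
  have h := ((hq.mul hE).const_mul (-(a x))).add
    (((lc_shift hA x t).mul hF).const_mul (1 - (a x + r x)))
  unfold lcG lcG1
  exact h

lemma lcG1_deriv (c : ℝ) (a r V : ℝ → ℝ) (hA : Differentiable ℝ a)
    (hR : Differentiable ℝ r) (hVd : Differentiable ℝ V)
    (hA' : Differentiable ℝ (deriv a)) (hR' : Differentiable ℝ (deriv r))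
    (hV' : Differentiable ℝ (deriv V)) (x t : ℝ) :
    HasDerivAt (lcG1 c a r V x) (lcG2 c a r V x t) t := by
  have hE := lc_exp c hVd x t
  have hF := lc_exp (-c) hVd x t
  have hq : HasDerivAt (fun h => 1 - (a (x + h) + r (x + h)))
      (-(deriv a (x + t) + deriv r (x + t))) t :=
    ((lc_shift hA x t).add (lc_shift hR x t)).const_sub 1
  have hu : HasDerivAt (fun h => -(deriv a (x + h) + deriv r (x + h)))
      (-(deriv (deriv a) (x + t) + deriv (deriv r) (x + t))) t :=
    ((lc_shift hA' x t).add (lc_shift hR' x t)).neg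
  have hEc := hE.mul ((lc_shift hV' x t).const_mul c)
  have hFc := hF.mul ((lc_shift hV' x t).const_mul (-c))
  have h := (((hu.mul hE).add (hq.mul hEc)).const_mul (-(a x))).add
    ((((lc_shift hA' x t).mul hF).add ((lc_shift hA x t).mul hFc)).const_mul (1 - (a x + r x)))
  unfold lcG1
  exact h.congr_deriv (by unfold lcG2; simp only [Pi.mul_apply]; ring)

/-- Formal continuum limit of the lattice hopping operator.
For `a, r, V` twice continuously differentiable and `ρ := a + r`, the hopping
operator `F_h(x)` of the lattice scheme satisfies
`F_h(x)/h² → (1-ρ)a'' + aρ'' - 2c(a'(1-ρ)V' - aρ'V' + a(1-ρ)V'')` as `h → 0⁺`,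
i.e. the discrete lattice dynamics are consistent with a nonlinear
cross-diffusion–drift operator. -/
theorem lattice_consistency_cross_diffusion
    (c : ℝ) (a r V : ℝ → ℝ)
    (ha : ContDiff ℝ 2 a) (hr : ContDiff ℝ 2 r) (hV : ContDiff ℝ 2 V)
    (x : ℝ) :
    Filter.Tendsto
      (fun h : ℝ =>
        (-(a x) * (1 - (a (x - h) + r (x - h))) * Real.exp (-(c * (V x - V (x - h))))
          + a (x - h) * (1 - (a x + r x)) * Real.exp (-(c * (V (x - h) - V x)))
          - a x * (1 - (a (x + h) + r (x + h))) * Real.exp (-(c * (V x - V (x + h))))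
          + a (x + h) * (1 - (a x + r x)) * Real.exp (-(c * (V (x + h) - V x)))) / h ^ 2)
      (nhdsWithin 0 (Set.Ioi 0))
      (nhds ((1 - (a x + r x)) * deriv (deriv a) x
        + a x * deriv (deriv (fun y => a y + r y)) x
        - 2 * c * (deriv a x * (1 - (a x + r x)) * deriv V x
          - a x * deriv (fun y => a y + r y) x * deriv V x
          + a x * (1 - (a x + r x)) * deriv (deriv V) x))) := by
  have hA : Differentiable ℝ a := ha.differentiable two_ne_zero
  have hR : Differentiable ℝ r := hr.differentiable two_ne_zero
  have hVd : Differentiable ℝ V := hV.differentiable two_ne_zero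
  have hA' : Differentiable ℝ (deriv a) := by
    have := (contDiff_succ_iff_deriv.mp (show ContDiff ℝ (1 + 1) a from by exact_mod_cast ha)).2.2
    exact this.differentiable one_ne_zero
  have hR' : Differentiable ℝ (deriv r) := by
    have := (contDiff_succ_iff_deriv.mp (show ContDiff ℝ (1 + 1) r from by exact_mod_cast hr)).2.2
    exact this.differentiable one_ne_zero
  have hV' : Differentiable ℝ (deriv V) := by
    have := (contDiff_succ_iff_deriv.mp (show ContDiff ℝ (1 + 1) V from by exact_mod_cast hV)).2.2
    exact this.differentiable one_ne_zero
  -- the numerator is `lcG h + lcG (-h)`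
  have hNum : ∀ h : ℝ,
      (-(a x) * (1 - (a (x - h) + r (x - h))) * Real.exp (-(c * (V x - V (x - h))))
          + a (x - h) * (1 - (a x + r x)) * Real.exp (-(c * (V (x - h) - V x)))
          - a x * (1 - (a (x + h) + r (x + h))) * Real.exp (-(c * (V x - V (x + h))))
          + a (x + h) * (1 - (a x + r x)) * Real.exp (-(c * (V (x + h) - V x))))
        = lcG c a r V x h + lcG c a r V x (-h) := by
    intro h
    simp only [lcG]
    rw [show x + -h = x - h by ring,
      show -(c * (V x - V (x - h))) = c * (V (x - h) - V x) by ring,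
      show -(c * (V x - V (x + h))) = c * (V (x + h) - V x) by ring,
      show -(c * (V (x - h) - V x)) = -c * (V (x - h) - V x) by ring,
      show -(c * (V (x + h) - V x)) = -c * (V (x + h) - V x) by ring]
    ring
  -- derivative of the even combination
  have hGd : ∀ t : ℝ, HasDerivAt (fun h => lcG c a r V x h + lcG c a r V x (-h))
      (lcG1 c a r V x t - lcG1 c a r V x (-t)) t := by
    intro t
    have h1 := lcG_deriv c a r V hA hR hVd x t
    have h2 : HasDerivAt (fun h : ℝ => lcG c a r V x (-h))
        (lcG1 c a r V x (-t) * (-1)) t :=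
      (lcG_deriv c a r V hA hR hVd x (-t)).comp t (hasDerivAt_neg t)
    have := h1.add h2
    exact this.congr_deriv (by ring)
  have hG1d : HasDerivAt (fun t => lcG1 c a r V x t - lcG1 c a r V x (-t))
      (2 * lcG2 c a r V x 0) 0 := by
    have h1 := lcG1_deriv c a r V hA hR hVd hA' hR' hV' x 0
    have h2 : HasDerivAt (fun h : ℝ => lcG1 c a r V x (-h))
        (lcG2 c a r V x (-0) * (-1)) 0 :=
      (lcG1_deriv c a r V hA hR hVd hA' hR' hV' x (-0)).comp 0 (hasDerivAt_neg 0)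
    have := h1.sub h2
    exact this.congr_deriv (by rw [neg_zero]; ring)
  -- values at 0
  have hG0 : lcG c a r V x 0 = 0 := by
    simp only [lcG, add_zero, sub_self, mul_zero, Real.exp_zero, mul_one]
    ring
  have hG10 : (fun t => lcG1 c a r V x t - lcG1 c a r V x (-t)) 0 = 0 := by
    simp
  -- slope limit for G1
  have hslope := hasDerivAt_iff_tendsto_slope.mp hG1d
  have hmono : nhdsWithin (0:ℝ) (Set.Ioi 0) ≤ nhdsWithin (0:ℝ) {0}ᶜ :=
    nhdsWithin_mono 0 (fun y hy => ne_of_gt hy)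
  have hdiv : Tendsto (fun h : ℝ =>
      ((fun t => lcG1 c a r V x t - lcG1 c a r V x (-t)) h) / (2 * h))
      (nhdsWithin 0 (Set.Ioi 0)) (nhds (lcG2 c a r V x 0)) := by
    have h2 := (hslope.mono_left hmono).div_const 2
    have : (2 : ℝ) * lcG2 c a r V x 0 / 2 = lcG2 c a r V x 0 := by ring
    rw [this] at h2
    refine h2.congr fun h => ?_
    simp only [slope_def_field, hG10]
    field_simp
    ring
  -- L'Hôpital
  have hmain : Tendsto (fun h : ℝ =>
      (lcG c a r V x h + lcG c a r V x (-h)) / h ^ 2)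
      (nhdsWithin 0 (Set.Ioi 0)) (nhds (lcG2 c a r V x 0)) := by
    apply HasDerivAt.lhopital_zero_nhdsGT (f' := fun t => lcG1 c a r V x t - lcG1 c a r V x (-t))
      (g' := fun t => 2 * t)
    · exact Eventually.of_forall hGd
    · refine Eventually.of_forall fun t => ?_
      simpa using hasDerivAt_pow 2 t
    · filter_upwards [self_mem_nhdsWithin] with t ht
      exact mul_ne_zero two_ne_zero (ne_of_gt ht)
    · have hc := ((hGd 0).continuousAt.tendsto).mono_left
        (nhdsWithin_le_nhds (s := Set.Ioi (0:ℝ)))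
      simpa [hG0] using hc
    · have : Tendsto (fun h : ℝ => h ^ 2) (nhdsWithin 0 (Set.Ioi 0)) (nhds ((0:ℝ) ^ 2)) :=
        ((continuous_pow 2).tendsto 0).mono_left nhdsWithin_le_nhds
      simpa using this
    · exact hdiv
  -- identify the limit value
  have hd1 : deriv (fun y => a y + r y) x = deriv a x + deriv r x :=
    deriv_add (hA x) (hR x)
  have hd2 : deriv (deriv (fun y => a y + r y)) x = deriv (deriv a) x + deriv (deriv r) x := by
    have hfun : deriv (fun y => a y + r y) = fun y => deriv a y + deriv r y :=
      funext fun y => deriv_add (hA y) (hR y)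
    rw [hfun]
    exact deriv_add (hA' x) (hR' x)
  have hval : lcG2 c a r V x 0
      = (1 - (a x + r x)) * deriv (deriv a) x
        + a x * deriv (deriv (fun y => a y + r y)) x
        - 2 * c * (deriv a x * (1 - (a x + r x)) * deriv V x
          - a x * deriv (fun y => a y + r y) x * deriv V x
          + a x * (1 - (a x + r x)) * deriv (deriv V) x) := by
    rw [hd1, hd2]
    simp [lcG2]
    ring
  have := hmain
  rw [hval] at this
  refine this.congr fun h => ?_
  rw [hNum h]
end

section
/- Let α, β ≥ 0, Λ^max > 0, T > 0, and let g, f : [0,T] → ℝ be continuous with g(t) ≥ 0 and f(t) ≥ 0 for all t. Suppose Λ : [0,T] → ℝ is differentiable and satisfies the pool equation Λ'(t) = −α g(t) Λ(t)/Λ^max + β f(t)(1 − Λ(t)/Λ^max) for all t ∈ [0,T]. If 0 ≤ Λ(0) ≤ Λ^max, then 0 ≤ Λ(t) ≤ Λ^max for all t ∈ [0,T]; that is, the pool concentration never becomes negative and never exceeds its maximal capacity. -/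
open Set

/-- The pool ODE `Λ' = -α g Λ/Λ^max + β f (1 - Λ/Λ^max)` with
nonnegative continuous data `g, f` preserves the constraint `0 ≤ Λ ≤ Λ^max`:
if `0 ≤ Λ(0) ≤ Λ^max` then `0 ≤ Λ(t) ≤ Λ^max` for all `t ∈ [0,T]`. -/
theorem pool_ode_capacity_invariant
    (α β Λmax T : ℝ) (hα : 0 ≤ α) (hβ : 0 ≤ β) (hΛmax : 0 < Λmax) (hT : 0 < T)
    (g f Λ : ℝ → ℝ)
    (hg_cont : ContinuousOn g (Icc 0 T)) (hf_cont : ContinuousOn f (Icc 0 T))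
    (hg_nonneg : ∀ t ∈ Icc (0 : ℝ) T, 0 ≤ g t)
    (hf_nonneg : ∀ t ∈ Icc (0 : ℝ) T, 0 ≤ f t)
    (hΛ_ode : ∀ t ∈ Icc (0 : ℝ) T,
      HasDerivAt Λ (-α * g t * Λ t / Λmax + β * f t * (1 - Λ t / Λmax)) t)
    (h0_lower : 0 ≤ Λ 0) (h0_upper : Λ 0 ≤ Λmax) :
    ∀ t ∈ Icc (0 : ℝ) T, 0 ≤ Λ t ∧ Λ t ≤ Λmax := by
  have hΛ_cont : ContinuousOn Λ (Icc 0 T) := fun t ht =>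
    (hΛ_ode t ht).continuousAt.continuousWithinAt
  set F : ℝ → ℝ := fun t => -α * g t * Λ t / Λmax + β * f t * (1 - Λ t / Λmax) with hF
  -- Upper bound with ε-barrier
  have upper : ∀ ε > (0:ℝ), ∀ t ∈ Icc (0:ℝ) T, Λ t ≤ Λmax + ε * (1 + t) := by
    intro ε hε
    have := image_le_of_deriv_right_lt_deriv_boundary (f := Λ) (f' := F)
      (a := 0) (b := T) hΛ_cont
      (fun x hx => ((hΛ_ode x (Ico_subset_Icc_self hx)).hasDerivWithinAt))
      (B := fun t => Λmax + ε * (1 + t)) (B' := fun _ => ε)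
      (show Λ 0 ≤ Λmax + ε * (1 + 0) by nlinarith)
      (fun x => by
        have : HasDerivAt (fun t : ℝ => Λmax + ε * (1 + t)) (0 + ε * (0 + 1)) x :=
          (hasDerivAt_const x Λmax).add
            (((hasDerivAt_const x (1:ℝ)).add (hasDerivAt_id x)).const_mul ε)
        simpa using this)
      ?_
    · exact this
    · intro x hx hcontact
      have hc : Λ x = Λmax + ε * (1 + x) := hcontact
      have hx' : x ∈ Icc (0:ℝ) T := Ico_subset_Icc_self hx
      have h1x : (0:ℝ) < 1 + x := by linarith [hx.1]
      have hεx : 0 < ε * (1 + x) := mul_pos hε h1x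
      have hΛgt : Λmax < Λ x := by rw [hc]; linarith
      have hΛpos : 0 < Λ x := lt_trans hΛmax hΛgt
      have h1 : -α * g x * Λ x / Λmax ≤ 0 := by
        have hg0 := hg_nonneg x hx'
        have hn : 0 ≤ α * g x * Λ x := by positivity
        have hd : 0 ≤ α * g x * Λ x / Λmax := div_nonneg hn hΛmax.le
        have he : -α * g x * Λ x / Λmax = -(α * g x * Λ x / Λmax) := by ring
        rw [he]; linarith
      have h2 : β * f x * (1 - Λ x / Λmax) ≤ 0 := by
        have hf0 := hf_nonneg x hx'
        have hlt : 1 - Λ x / Λmax ≤ 0 := by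
          rw [sub_nonpos]
          exact le_of_lt ((one_lt_div hΛmax).2 hΛgt)
        exact mul_nonpos_of_nonneg_of_nonpos (by positivity) hlt
      have hFle : F x ≤ 0 := by simp only [hF]; linarith
      exact lt_of_le_of_lt hFle hε
  -- Lower bound with ε-barrier
  have lower : ∀ ε > (0:ℝ), ∀ t ∈ Icc (0:ℝ) T, -Λ t ≤ ε * (1 + t) := by
    intro ε hε
    have := image_le_of_deriv_right_lt_deriv_boundary (f := fun t => -Λ t)
      (f' := fun t => -F t) (a := 0) (b := T) hΛ_cont.neg
      (fun x hx => ((hΛ_ode x (Ico_subset_Icc_self hx)).hasDerivWithinAt).neg)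
      (B := fun t => ε * (1 + t)) (B' := fun _ => ε)
      (show -Λ 0 ≤ ε * (1 + 0) by nlinarith)
      (fun x => by
        have : HasDerivAt (fun t : ℝ => ε * (1 + t)) (ε * (0 + 1)) x :=
          (((hasDerivAt_const x (1:ℝ)).add (hasDerivAt_id x)).const_mul ε)
        simpa using this)
      ?_
    · exact this
    · intro x hx hcontact
      have hc : -Λ x = ε * (1 + x) := hcontact
      have hx' : x ∈ Icc (0:ℝ) T := Ico_subset_Icc_self hx
      have h1x : (0:ℝ) < 1 + x := by linarith [hx.1]
      have hεx : 0 < ε * (1 + x) := mul_pos hε h1x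
      have hΛneg : Λ x < 0 := by linarith
      have h1 : α * g x * Λ x / Λmax ≤ 0 := by
        have hg0 := hg_nonneg x hx'
        have : α * g x * Λ x ≤ 0 :=
          mul_nonpos_of_nonneg_of_nonpos (by positivity) hΛneg.le
        exact div_nonpos_of_nonpos_of_nonneg this hΛmax.le
      have h2 : 0 ≤ β * f x * (1 - Λ x / Λmax) := by
        have hf0 := hf_nonneg x hx'
        have : 0 ≤ 1 - Λ x / Λmax := by
          have : Λ x / Λmax < 0 := div_neg_of_neg_of_pos hΛneg hΛmax
          linarith
        positivity
      have hFle : -F x ≤ 0 := by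
        have he : -F x = α * g x * Λ x / Λmax - β * f x * (1 - Λ x / Λmax) := by
          simp only [hF]; ring
        rw [he]; linarith
      exact lt_of_le_of_lt hFle hε
  intro t ht
  have h1t : (0:ℝ) < 1 + t := by linarith [ht.1]
  constructor
  · by_contra h
    push_neg at h
    have hεpos : 0 < -Λ t / (2 * (1 + t)) := div_pos (by linarith) (by positivity)
    have hle := lower _ hεpos t ht
    have he : -Λ t / (2 * (1 + t)) * (1 + t) = -Λ t / 2 := by
      field_simp
    rw [he] at hle
    linarith
  · by_contra h
    push_neg at h
    have hεpos : 0 < (Λ t - Λmax) / (2 * (1 + t)) := div_pos (by linarith) (by positivity)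
    have hle := upper _ hεpos t ht
    have he : (Λ t - Λmax) / (2 * (1 + t)) * (1 + t) = (Λ t - Λmax) / 2 := by
      field_simp
    rw [he] at hle
    linarith
end

section
/- Let α, β ≥ 0, Λ^max > 0, τ > 0, and let (g_k)_{k≥0}, (f_k)_{k≥0} be real sequences with 0 ≤ g_k ≤ G and 0 ≤ f_k ≤ F for all k, for some constants G, F ≥ 0. Define the explicit Euler pool iteration Λ^{k+1} = Λ^k + τ(−α g_k Λ^k/Λ^max + β f_k (1 − Λ^k/Λ^max)). If 0 ≤ Λ^0 ≤ Λ^max and the step-size conditions τ α G ≤ Λ^max and τ β F ≤ Λ^max hold, then 0 ≤ Λ^k ≤ Λ^max for every k ≥ 0. -/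
/-- The explicit Euler pool iteration
`Λ^{k+1} = Λ^k + τ(-α g_k Λ^k/Λ^max + β f_k (1 - Λ^k/Λ^max))` with bounded
nonnegative data `0 ≤ g_k ≤ G`, `0 ≤ f_k ≤ F` preserves the constraint
`0 ≤ Λ^k ≤ Λ^max` for every `k`, provided `0 ≤ Λ^0 ≤ Λ^max` and the step-size
conditions `τ α G ≤ Λ^max` and `τ β F ≤ Λ^max` hold. -/
theorem discrete_pool_capacity_invariant
    (α β Λmax τ G F : ℝ)
    (hα : 0 ≤ α) (hβ : 0 ≤ β) (hΛmax : 0 < Λmax) (hτ : 0 < τ)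
    (hG : 0 ≤ G) (hF : 0 ≤ F)
    (g f : ℕ → ℝ)
    (hg : ∀ k, 0 ≤ g k ∧ g k ≤ G) (hf : ∀ k, 0 ≤ f k ∧ f k ≤ F)
    (Λ : ℕ → ℝ)
    (hupd : ∀ k, Λ (k + 1)
      = Λ k + τ * (-α * g k * Λ k / Λmax + β * f k * (1 - Λ k / Λmax)))
    (h0_lower : 0 ≤ Λ 0) (h0_upper : Λ 0 ≤ Λmax)
    (hstep_out : τ * α * G ≤ Λmax) (hstep_in : τ * β * F ≤ Λmax) :
    ∀ k : ℕ, 0 ≤ Λ k ∧ Λ k ≤ Λmax := by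
  intro k
  induction k with
  | zero => exact ⟨h0_lower, h0_upper⟩
  | succ k ih =>
    obtain ⟨hl, hu⟩ := ih
    obtain ⟨hg0, hgG⟩ := hg k
    obtain ⟨hf0, hfF⟩ := hf k
    have ha : τ * α * g k ≤ Λmax :=
      le_trans (mul_le_mul_of_nonneg_left hgG (by positivity)) hstep_out
    have hb : τ * β * f k ≤ Λmax :=
      le_trans (mul_le_mul_of_nonneg_left hfF (by positivity)) hstep_in
    have ha0 : 0 ≤ τ * α * g k := by positivity
    have hb0 : 0 ≤ τ * β * f k := by positivity
    have hkey : Λ (k + 1) * Λmax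
        = Λ k * (Λmax - τ * α * g k) + τ * β * f k * (Λmax - Λ k) := by
      rw [hupd k]
      field_simp
      ring
    constructor
    · have : 0 ≤ Λ (k + 1) * Λmax := by
        rw [hkey]
        have h1 : 0 ≤ Λ k * (Λmax - τ * α * g k) :=
          mul_nonneg hl (by linarith)
        have h2 : 0 ≤ τ * β * f k * (Λmax - Λ k) :=
          mul_nonneg hb0 (by linarith)
        linarith
      nlinarith
    · have : Λ (k + 1) * Λmax ≤ Λmax * Λmax := by
        rw [hkey]
        nlinarith
      nlinarith
end
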